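/- For any nonempty Z ⊆ X, φ ∈ C(X,ℝ) with M = ‖φ‖_∞, and 0 < θ < φ' ≤ 1, the upper θ-intermediate topological pressure satisfies P̄(f,Z,φ,θ) ≤ P̄(f,Z,φ,φ') ≤ (φ'/θ)·P̄(f,Z,φ,θ) + (φ'/θ − 1)·M, and the same chain of inequalities holds for the lower θ-intermediate pressure P̲. In particular, for φ = 0 one obtains h̄(f,Z,θ) ≤ h̄(f,Z,φ') ≤ (φ'/θ)·h̄(f,Z,θ) for the upper θ-intermediate topological entropy. -/

import Mathlib

set_option linter.unusedSectionVars false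
set_option linter.unusedVariables false


open Filter Topology Set ENNReal NNReal MeasureTheory

namespace NDSPressure

variable {X : Type*} [MetricSpace X]

/-- `traj f j = f_j ∘ ⋯ ∘ f_1` (with `traj f 0 = id`), the time-`j` map of the
nonautonomous system `f = {f_i}_{i ≥ 1}`. -/
def traj (f : ℕ → X → X) : ℕ → X → X
  | 0 => id
  | n + 1 => f (n + 1) ∘ traj f n

/-- The nonautonomous Birkhoff sum `S_n φ(x) = Σ_{j<n} φ(f_1^j x)`. -/
noncomputable def birkhoff (f : ℕ → X → X) (φ : X → ℝ) (n : ℕ) (x : X) : ℝ :=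
  ∑ j ∈ Finset.range n, φ (traj f j x)

/-- The Bowen ball `B_n(x, δ)` for the nonautonomous system `f`. -/
def bowenBall (f : ℕ → X → X) (n : ℕ) (δ : ℝ) (x : X) : Set X :=
  {y | ∀ j < n, dist (traj f j x) (traj f j y) < δ}

/-- The Bowen metric `d_n(x,y) = max_{0 ≤ j ≤ n-1} d(f_1^j x, f_1^j y)`. -/
noncomputable def dnDist (f : ℕ → X → X) (n : ℕ) (x y : X) : ℝ :=
  (((Finset.range n).sup fun j => nndist (traj f j x) (traj f j y) : ℝ≥0) : ℝ)

/-- Admissible string/ball lengths for the parameter `θ ∈ [0,1]`: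
`N ≤ n` and `n < N/θ + 1` (no upper restriction when `θ = 0`). -/
def admissible (θ : ℝ) (N n : ℕ) : Prop :=
  N ≤ n ∧ (n : ℝ) * θ < N + θ

/-- Weight `exp(-α n + sup_{B_n(x,δ)} S_n φ)` of a Bowen ball, as an extended nonnegative real. -/
noncomputable def ballWeight (f : ℕ → X → X) (φ : X → ℝ) (α δ : ℝ) (p : X × ℕ) : ℝ≥0∞ :=
  ENNReal.ofReal (Real.exp (-α * p.2 + sSup (birkhoff f φ p.2 '' bowenBall f p.2 δ p.1)))

/-- Weight `exp(-α n + S_n φ(x))` of a Bowen ball using the value at the center. -/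
noncomputable def ballWeightC (f : ℕ → X → X) (φ : X → ℝ) (α : ℝ) (p : X × ℕ) : ℝ≥0∞ :=
  ENNReal.ofReal (Real.exp (-α * p.2 + birkhoff f φ p.2 p.1))

/-- The Carathéodory–Pesin set function `M(Z, α, φ, δ, N, θ)` defined via covers of `Z`
by Bowen balls of admissible lengths. -/
noncomputable def MBall (f : ℕ → X → X) (Z : Set X) (α : ℝ) (φ : X → ℝ) (δ : ℝ)
    (N : ℕ) (θ : ℝ) : ℝ≥0∞ :=
  ⨅ (S : Set (X × ℕ)) (_ : S.Countable) (_ : ∀ p ∈ S, admissible θ N p.2)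
    (_ : Z ⊆ ⋃ p ∈ S, bowenBall f p.2 δ p.1),
      ∑' p : S, ballWeight f φ α δ (p : X × ℕ)

/-- Variant of `MBall` where Birkhoff sums are evaluated at the centers of the balls. -/
noncomputable def MBallC (f : ℕ → X → X) (Z : Set X) (α : ℝ) (φ : X → ℝ) (δ : ℝ)
    (N : ℕ) (θ : ℝ) : ℝ≥0∞ :=
  ⨅ (S : Set (X × ℕ)) (_ : S.Countable) (_ : ∀ p ∈ S, admissible θ N p.2)
    (_ : Z ⊆ ⋃ p ∈ S, bowenBall f p.2 δ p.1),
      ∑' p : S, ballWeightC f φ α (p : X × ℕ)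

noncomputable def mLowerBall (f : ℕ → X → X) (Z : Set X) (α : ℝ) (φ : X → ℝ)
    (δ θ : ℝ) : ℝ≥0∞ :=
  liminf (fun N => MBall f Z α φ δ N θ) atTop

noncomputable def mUpperBall (f : ℕ → X → X) (Z : Set X) (α : ℝ) (φ : X → ℝ)
    (δ θ : ℝ) : ℝ≥0∞ :=
  limsup (fun N => MBall f Z α φ δ N θ) atTop

/-- Lower θ-intermediate topological pressure of `φ` on `Z` at scale `δ`. -/
noncomputable def lowerPBall (f : ℕ → X → X) (Z : Set X) (φ : X → ℝ) (δ θ : ℝ) : ℝ :=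
  sInf {α : ℝ | mLowerBall f Z α φ δ θ = 0}

/-- Upper θ-intermediate topological pressure of `φ` on `Z` at scale `δ`. -/
noncomputable def upperPBall (f : ℕ → X → X) (Z : Set X) (φ : X → ℝ) (δ θ : ℝ) : ℝ :=
  sInf {α : ℝ | mUpperBall f Z α φ δ θ = 0}

/-- Center variants of the pressures at scale `δ`. -/
noncomputable def lowerPBallC (f : ℕ → X → X) (Z : Set X) (φ : X → ℝ) (δ θ : ℝ) : ℝ :=
  sInf {α : ℝ | liminf (fun N => MBallC f Z α φ δ N θ) atTop = 0}

noncomputable def upperPBallC (f : ℕ → X → X) (Z : Set X) (φ : X → ℝ) (δ θ : ℝ) : ℝ :=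
  sInf {α : ℝ | limsup (fun N => MBallC f Z α φ δ N θ) atTop = 0}

/-- The lower θ-intermediate topological pressure `P̲(f, Z, φ, θ) = lim_{δ→0} P̲(f,Z,φ,δ,θ)`
(the limit exists; we take the `limsup` along `δ → 0⁺`, which equals it). -/
noncomputable def lowerP (f : ℕ → X → X) (Z : Set X) (φ : X → ℝ) (θ : ℝ) : ℝ :=
  limsup (fun δ => lowerPBall f Z φ δ θ) (𝓝[>] (0 : ℝ))

/-- The upper θ-intermediate topological pressure `P̄(f, Z, φ, θ)`. -/
noncomputable def upperP (f : ℕ → X → X) (Z : Set X) (φ : X → ℝ) (θ : ℝ) : ℝ :=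
  limsup (fun δ => upperPBall f Z φ δ θ) (𝓝[>] (0 : ℝ))

/-! ### String (open cover) version -/

/-- For a string `L = (U_0, …, U_{m-1})` of sets, the set
`X(L) = {x : f_1^j x ∈ U_j for all j < m}`. -/
def stringSet (f : ℕ → X → X) (L : List (Set X)) : Set X :=
  {x | ∀ j < L.length, traj f j x ∈ L.getD j ∅}

/-- Weight of a string. -/
noncomputable def strWeight (f : ℕ → X → X) (φ : X → ℝ) (α : ℝ) (L : List (Set X)) : ℝ≥0∞ :=
  ENNReal.ofReal (Real.exp (-α * L.length + sSup (birkhoff f φ L.length '' stringSet f L)))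

/-- The Carathéodory–Pesin set function defined via covers of `Z` by string sets coming
from the cover `𝒰`, with admissible string lengths. -/
noncomputable def MStr (f : ℕ → X → X) (Z : Set X) (α : ℝ) (φ : X → ℝ)
    (𝒰 : Finset (Set X)) (N : ℕ) (θ : ℝ) : ℝ≥0∞ :=
  ⨅ (G : Set (List (Set X))) (_ : G.Countable)
    (_ : ∀ L ∈ G, (∀ U ∈ L, U ∈ 𝒰) ∧ admissible θ N L.length)
    (_ : Z ⊆ ⋃ L ∈ G, stringSet f L),
      ∑' L : G, strWeight f φ α (L : List (Set X))

/-- Lower θ-intermediate pressure relative to the open cover `𝒰`. -/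
noncomputable def lowerPStr (f : ℕ → X → X) (Z : Set X) (φ : X → ℝ)
    (𝒰 : Finset (Set X)) (θ : ℝ) : ℝ :=
  sInf {α : ℝ | liminf (fun N => MStr f Z α φ 𝒰 N θ) atTop = 0}

/-- Upper θ-intermediate pressure relative to the open cover `𝒰`. -/
noncomputable def upperPStr (f : ℕ → X → X) (Z : Set X) (φ : X → ℝ)
    (𝒰 : Finset (Set X)) (θ : ℝ) : ℝ :=
  sInf {α : ℝ | limsup (fun N => MStr f Z α φ 𝒰 N θ) atTop = 0}

/-- `𝒰` is a finite open cover of `X`. -/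
def IsFinOpenCover (𝒰 : Finset (Set X)) : Prop :=
  (∀ U ∈ 𝒰, IsOpen U) ∧ ⋃₀ (𝒰 : Set (Set X)) = Set.univ

/-- The mesh `|𝒰|` of a cover: the maximal diameter of its elements. -/
noncomputable def coverDiam (𝒰 : Finset (Set X)) : ℝ :=
  sSup (Metric.diam '' (𝒰 : Set (Set X)))

/-- The filter of finite open covers of vanishing mesh (`|𝒰| → 0`). -/
noncomputable def coverFilter (X : Type*) [MetricSpace X] :
    Filter {𝒰 : Finset (Set X) // IsFinOpenCover 𝒰} :=
  Filter.comap (fun 𝒰 => coverDiam 𝒰.1) (𝓝 (0 : ℝ))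

/-- The open-cover definition of the lower θ-intermediate pressure:
`lim_{|𝒰|→0} P̲(f,Z,φ,𝒰,θ)` (as a `limsup` along the cover filter). -/
noncomputable def lowerPStrFull (f : ℕ → X → X) (Z : Set X) (φ : X → ℝ) (θ : ℝ) : ℝ :=
  limsup (fun 𝒰 : {𝒰 : Finset (Set X) // IsFinOpenCover 𝒰} => lowerPStr f Z φ 𝒰.1 θ)
    (coverFilter X)

/-- The open-cover definition of the upper θ-intermediate pressure. -/
noncomputable def upperPStrFull (f : ℕ → X → X) (Z : Set X) (φ : X → ℝ) (θ : ℝ) : ℝ :=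
  limsup (fun 𝒰 : {𝒰 : Finset (Set X) // IsFinOpenCover 𝒰} => upperPStr f Z φ 𝒰.1 θ)
    (coverFilter X)

/-! ### Measure-theoretic version -/

/-- `M_μ(f, α, φ, ε, N, θ)`: infimum over finite μ-covers by Bowen balls of admissible
lengths of the total weight. -/
noncomputable def MMeas [MeasurableSpace X] (f : ℕ → X → X) (μ : Measure X) (α : ℝ)
    (φ : X → ℝ) (ε : ℝ) (N : ℕ) (θ : ℝ) : ℝ≥0∞ :=
  ⨅ (S : Finset (X × ℕ)) (_ : ∀ p ∈ S, admissible θ N p.2)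
    (_ : μ (⋃ p ∈ S, bowenBall f p.2 ε p.1) = 1),
      ∑ p ∈ S, ballWeight f φ α ε p

noncomputable def lowerPMeasEps [MeasurableSpace X] (f : ℕ → X → X) (μ : Measure X)
    (φ : X → ℝ) (ε θ : ℝ) : ℝ :=
  sInf {α : ℝ | liminf (fun N => MMeas f μ α φ ε N θ) atTop = 0}

noncomputable def upperPMeasEps [MeasurableSpace X] (f : ℕ → X → X) (μ : Measure X)
    (φ : X → ℝ) (ε θ : ℝ) : ℝ :=
  sInf {α : ℝ | limsup (fun N => MMeas f μ α φ ε N θ) atTop = 0}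

/-- The lower θ-intermediate measure-theoretic pressure `P̲_μ(f, φ, θ)`. -/
noncomputable def lowerPMeas [MeasurableSpace X] (f : ℕ → X → X) (μ : Measure X)
    (φ : X → ℝ) (θ : ℝ) : ℝ :=
  limsup (fun ε => lowerPMeasEps f μ φ ε θ) (𝓝[>] (0 : ℝ))

/-- The upper θ-intermediate measure-theoretic pressure `P̄_μ(f, φ, θ)`. -/
noncomputable def upperPMeas [MeasurableSpace X] (f : ℕ → X → X) (μ : Measure X)
    (φ : X → ℝ) (θ : ℝ) : ℝ :=
  limsup (fun ε => upperPMeasEps f μ φ ε θ) (𝓝[>] (0 : ℝ))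

/-! ### Power system -/

/-- `compFrom f k n = f_{k+n} ∘ ⋯ ∘ f_{k+1}`. -/
def compFrom (f : ℕ → X → X) (k : ℕ) : ℕ → X → X
  | 0 => id
  | n + 1 => f (k + n + 1) ∘ compFrom f k n

/-- The `m`-th power system `f^m = {f_{(i-1)m+1}^{im}}_{i ≥ 1}`. -/
def powerSeq (f : ℕ → X → X) (m : ℕ) : ℕ → X → X :=
  fun i => compFrom f ((i - 1) * m) m

section AuxProofs

variable {f : ℕ → X → X} {ψ : X → ℝ} {M δ θ φ' α : ℝ} {Z : Set X}

lemma birkhoff_le_of_abs_le (hM : ∀ x, |ψ x| ≤ M) (n : ℕ) (x : X) :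
    birkhoff f ψ n x ≤ n * M := by
  calc birkhoff f ψ n x ≤ ∑ _j ∈ Finset.range n, M :=
        Finset.sum_le_sum fun j _ => (abs_le.mp (hM _)).2
    _ = n * M := by simp [mul_comm]

lemma neg_le_birkhoff_of_abs_le (hM : ∀ x, |ψ x| ≤ M) (n : ℕ) (x : X) :
    -((n : ℝ) * M) ≤ birkhoff f ψ n x := by
  have : ∑ _j ∈ Finset.range n, (-M) ≤ birkhoff f ψ n x :=
    Finset.sum_le_sum fun j _ => (abs_le.mp (hM _)).1
  simpa [mul_comm] using this

lemma self_mem_bowenBall (hδ : 0 < δ) (n : ℕ) (x : X) : x ∈ bowenBall f n δ x :=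
  fun j _ => by simpa using hδ

lemma bddAbove_birkhoff_image (hM : ∀ x, |ψ x| ≤ M) (n : ℕ) (s : Set X) :
    BddAbove (birkhoff f ψ n '' s) :=
  ⟨n * M, by rintro v ⟨y, -, rfl⟩; exact birkhoff_le_of_abs_le hM n y⟩

lemma bowenBall_anti {m n : ℕ} (h : m ≤ n) (x : X) :
    bowenBall f n δ x ⊆ bowenBall f m δ x :=
  fun y hy j hj => hy j (lt_of_lt_of_le hj h)

lemma admissible_mono (hθ : 0 < θ) (hθφ : θ ≤ φ') {N n : ℕ}
    (h : admissible φ' N n) : admissible θ N n := by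
  obtain ⟨h1, h2⟩ := h
  refine ⟨h1, ?_⟩
  rcases Nat.eq_zero_or_pos n with rfl | hn
  · simpa using by positivity
  · have hn1 : (1 : ℝ) ≤ (n : ℝ) := by exact_mod_cast hn
    nlinarith

lemma MBall_mono_theta (hθ : 0 < θ) (hθφ : θ ≤ φ') (N : ℕ) :
    MBall f Z α ψ δ N θ ≤ MBall f Z α ψ δ N φ' := by
  simp only [MBall]
  refine le_iInf fun S => le_iInf fun hSc => le_iInf fun hadm => le_iInf fun hcov => ?_
  exact iInf_le_of_le S (iInf_le_of_le hSc (iInf_le_of_le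
    (fun p hp => admissible_mono hθ hθφ (hadm p hp)) (iInf_le_of_le hcov le_rfl)))

lemma one_le_MBall (hδ : 0 < δ) (hZ : Z.Nonempty) (hM : ∀ x, |ψ x| ≤ M) (hα : α < -M)
    (N : ℕ) (θ'' : ℝ) : 1 ≤ MBall f Z α ψ δ N θ'' := by
  simp only [MBall]
  refine le_iInf fun S => le_iInf fun hSc => le_iInf fun hadm => le_iInf fun hcov => ?_
  obtain ⟨z, hz⟩ := hZ
  have := hcov hz
  simp only [Set.mem_iUnion] at this
  obtain ⟨p, hpS, hzp⟩ := this
  have h1 : (1 : ℝ≥0∞) ≤ ballWeight f ψ α δ p := by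
    rw [ballWeight, ← ENNReal.ofReal_one]
    apply ENNReal.ofReal_le_ofReal
    have hx : birkhoff f ψ p.2 p.1 ∈ birkhoff f ψ p.2 '' bowenBall f p.2 δ p.1 :=
      ⟨p.1, self_mem_bowenBall hδ _ _, rfl⟩
    have hs : birkhoff f ψ p.2 p.1 ≤ sSup (birkhoff f ψ p.2 '' bowenBall f p.2 δ p.1) :=
      le_csSup (bddAbove_birkhoff_image hM _ _) hx
    have hb := neg_le_birkhoff_of_abs_le (f:=f) hM p.2 p.1
    have : (0 : ℝ) ≤ -α * p.2 + sSup (birkhoff f ψ p.2 '' bowenBall f p.2 δ p.1) := by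
      have hn : (0:ℝ) ≤ (p.2 : ℝ) := Nat.cast_nonneg _
      nlinarith
    exact Real.one_le_exp this
  refine h1.trans ?_
  exact ENNReal.le_tsum (⟨p, hpS⟩ : S)

lemma ballWeight_truncate_le (hδ : 0 < δ) (hθ : 0 < θ)
    (hM : ∀ x, |ψ x| ≤ M) (hα : -M ≤ α) {γ : ℝ} (hγ0 : 0 ≤ γ)
    (hγ : ∀ a b : X, dist a b ≤ δ → ψ a - ψ b ≤ γ)
    {n m : ℕ} (hmn : m ≤ n) (hkey : (n : ℝ) ≤ 1 + (m : ℝ) * (φ' / θ)) (x : X) :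
    ballWeight f ψ ((φ' / θ) * (α + M) - M + γ) δ (x, m)
      ≤ ENNReal.ofReal (Real.exp (α + M)) * ballWeight f ψ α δ (x, n) := by
  rw [ballWeight, ballWeight, ← ENNReal.ofReal_mul (Real.exp_nonneg _), ← Real.exp_add]
  apply ENNReal.ofReal_le_ofReal
  apply Real.exp_le_exp.mpr
  have hA'1 : sSup (birkhoff f ψ m '' bowenBall f m δ x) ≤ birkhoff f ψ m x + m * γ := by
    refine csSup_le ⟨_, ⟨x, self_mem_bowenBall hδ _ _, rfl⟩⟩ ?_
    rintro v ⟨y, hy, rfl⟩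
    have hsum : birkhoff f ψ m y - birkhoff f ψ m x ≤ m * γ := by
      rw [birkhoff, birkhoff, ← Finset.sum_sub_distrib]
      have hb := Finset.sum_le_card_nsmul (Finset.range m)
        (fun j => ψ (traj f j y) - ψ (traj f j x)) γ
        (fun j hj => hγ _ _ (by rw [dist_comm]; exact (hy j (Finset.mem_range.mp hj)).le))
      simpa [nsmul_eq_mul] using hb
    linarith
  have hA'2 : birkhoff f ψ m x ≤ birkhoff f ψ n x + ((n : ℝ) - m) * M := by
    have hsplit := Finset.sum_range_add_sum_Ico (fun j => ψ (traj f j x)) hmn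
    have hlow : ((n - m : ℕ) : ℝ) * (-M) ≤ ∑ j ∈ Finset.Ico m n, ψ (traj f j x) := by
      have hb := Finset.card_nsmul_le_sum (Finset.Ico m n)
        (fun j => ψ (traj f j x)) (-M) (fun j _ => (abs_le.mp (hM _)).1)
      simpa [Nat.card_Ico, nsmul_eq_mul] using hb
    have hcast : ((n - m : ℕ) : ℝ) = (n : ℝ) - m := by
      push_cast [Nat.cast_sub hmn]; ring
    rw [hcast] at hlow
    have heq : birkhoff f ψ n x = birkhoff f ψ m x + ∑ j ∈ Finset.Ico m n, ψ (traj f j x) := by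
      rw [birkhoff, birkhoff, ← hsplit]
    nlinarith
  have hA1 : birkhoff f ψ n x ≤ sSup (birkhoff f ψ n '' bowenBall f n δ x) :=
    le_csSup (bddAbove_birkhoff_image hM _ _) ⟨x, self_mem_bowenBall hδ _ _, rfl⟩
  have hαM : (0 : ℝ) ≤ α + M := by linarith
  have hkey2 : (n : ℝ) * (α + M) ≤ (1 + (m : ℝ) * (φ' / θ)) * (α + M) :=
    mul_le_mul_of_nonneg_right hkey hαM
  nlinarith [hA'1, hA'2, hA1, hkey2]

lemma MBall_truncation (hδ : 0 < δ) (hθ : 0 < θ) (hθφ : θ < φ') (hφ1 : φ' ≤ 1)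
    (hM : ∀ x, |ψ x| ≤ M) (hα : -M ≤ α) {γ : ℝ} (hγ0 : 0 ≤ γ)
    (hγ : ∀ a b : X, dist a b ≤ δ → ψ a - ψ b ≤ γ) (N' : ℕ) :
    MBall f Z ((φ' / θ) * (α + M) - M + γ) ψ δ N' φ'
      ≤ ENNReal.ofReal (Real.exp (α + M)) * MBall f Z α ψ δ N' θ := by
  classical
  have hφ0 : 0 < φ' := hθ.trans hθφ
  set β := (φ' / θ) * (α + M) - M + γ with hβ
  set K := ENNReal.ofReal (Real.exp (α + M)) with hK
  have hK0 : K ≠ 0 := by simp [hK, Real.exp_pos]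
  have hKt : K ≠ ∞ := ENNReal.ofReal_ne_top
  set mb := ⌈(N' : ℝ) / φ'⌉₊ with hmb
  have hmb1 : ((N' : ℝ)) / φ' ≤ mb := Nat.le_ceil _
  have hmb2 : (mb : ℝ) < (N' : ℝ) / φ' + 1 := Nat.ceil_lt_add_one (by positivity)
  have hNmb : N' ≤ mb := by
    have h1 : (N' : ℝ) ≤ (N' : ℝ) / φ' := by
      rw [le_div_iff₀ hφ0]; nlinarith [Nat.cast_nonneg (α := ℝ) N']
    exact_mod_cast h1.trans hmb1
  have hmbφ : (mb : ℝ) * φ' < (N' : ℝ) + φ' := by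
    have h2 := mul_lt_mul_of_pos_right hmb2 hφ0
    have h3 : ((N' : ℝ) / φ' + 1) * φ' = (N' : ℝ) + φ' := by field_simp
    linarith
  set tr : X × ℕ → X × ℕ := fun p => (p.1, min p.2 mb) with htr
  have main : ∀ S : Set (X × ℕ), S.Countable → (∀ p ∈ S, admissible θ N' p.2) →
      Z ⊆ ⋃ p ∈ S, bowenBall f p.2 δ p.1 →
      MBall f Z β ψ δ N' φ' ≤ K * ∑' p : S, ballWeight f ψ α δ (p : X × ℕ) := by
    intro S hSc hadm hcov
    have hstep1 : MBall f Z β ψ δ N' φ'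
        ≤ ∑' q : (tr '' S), ballWeight f ψ β δ (q : X × ℕ) := by
      simp only [MBall]
      refine iInf_le_of_le (tr '' S) (iInf_le_of_le (hSc.image tr)
        (iInf_le_of_le ?_ (iInf_le_of_le ?_ le_rfl)))
      · rintro q ⟨p, hpS, rfl⟩
        obtain ⟨h1, h2⟩ := hadm p hpS
        refine ⟨le_min h1 hNmb, ?_⟩
        show ((min p.2 mb : ℕ) : ℝ) * φ' < (N' : ℝ) + φ'
        have hle : ((min p.2 mb : ℕ) : ℝ) ≤ (mb : ℝ) := by exact_mod_cast min_le_right _ _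
        nlinarith
      · intro z hz
        have hz2 := hcov hz
        simp only [Set.mem_iUnion] at hz2
        obtain ⟨p, hpS, hzp⟩ := hz2
        have : z ∈ bowenBall f (min p.2 mb) δ p.1 :=
          bowenBall_anti (min_le_left _ _) _ hzp
        exact Set.mem_biUnion (Set.mem_image_of_mem tr hpS) this
    have hstep2 : ∑' q : (tr '' S), ballWeight f ψ β δ (q : X × ℕ)
        ≤ ∑' p : S, ballWeight f ψ β δ (tr (p : X × ℕ)) := by
      have hsurj : Function.Surjective
          (fun p : S => (⟨tr p, Set.mem_image_of_mem tr p.2⟩ : tr '' S)) := by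
        rintro ⟨q, p, hpS, rfl⟩
        exact ⟨⟨p, hpS⟩, rfl⟩
      exact ENNReal.tsum_le_tsum_comp_of_surjective hsurj
        (fun q : tr '' S => ballWeight f ψ β δ (q : X × ℕ))
    have hstep3 : ∑' p : S, ballWeight f ψ β δ (tr (p : X × ℕ))
        ≤ K * ∑' p : S, ballWeight f ψ α δ (p : X × ℕ) := by
      rw [← ENNReal.tsum_mul_left]
      refine ENNReal.tsum_le_tsum fun p => ?_
      obtain ⟨⟨x, n⟩, hp⟩ := p
      obtain ⟨h1, h2⟩ := hadm _ hp
      have hcθ : (1 : ℝ) ≤ φ' / θ := (one_le_div hθ).mpr hθφ.le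
      have hkey : (n : ℝ) ≤ 1 + ((min n mb : ℕ) : ℝ) * (φ' / θ) := by
        rcases le_total n mb with h | h
        · rw [min_eq_left h]
          have h0 : (0 : ℝ) ≤ (n : ℝ) := Nat.cast_nonneg _
          nlinarith
        · rw [min_eq_right h]
          have h3 : (n : ℝ) * θ < (N' : ℝ) + θ := h2
          have h4 : (n : ℝ) < (N' : ℝ) / θ + 1 := by
            have h4a : (n : ℝ) < ((N' : ℝ) + θ) / θ := (lt_div_iff₀ hθ).mpr h3
            have h4b : ((N' : ℝ) + θ) / θ = (N' : ℝ) / θ + 1 := by field_simp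
            linarith
          have h5 : (N' : ℝ) / θ = ((N' : ℝ) / φ') * (φ' / θ) := by
            field_simp
          have h6 : ((N' : ℝ) / φ') * (φ' / θ) ≤ (mb : ℝ) * (φ' / θ) :=
            mul_le_mul_of_nonneg_right hmb1 (by positivity)
          linarith
      show ballWeight f ψ β δ (x, min n mb) ≤ K * ballWeight f ψ α δ (x, n)
      rw [hβ, hK]
      exact ballWeight_truncate_le hδ hθ hM hα hγ0 hγ (min_le_left _ _) hkey x
    exact hstep1.trans (hstep2.trans hstep3)
  have hdiv : MBall f Z β ψ δ N' φ' / K ≤ MBall f Z α ψ δ N' θ := by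
    conv_rhs => rw [MBall]
    refine le_iInf fun S => le_iInf fun hSc => le_iInf fun hadm => le_iInf fun hcov => ?_
    rw [ENNReal.div_le_iff_le_mul (Or.inl hK0) (Or.inl hKt), mul_comm]
    exact main S hSc hadm hcov
  rw [ENNReal.div_le_iff_le_mul (Or.inl hK0) (Or.inl hKt)] at hdiv
  rwa [mul_comm] at hdiv

lemma limsup_zero_of_le_mul {u v : ℕ → ℝ≥0∞} {K : ℝ≥0∞} (hKt : K ≠ ∞)
    (h : ∀ n, v n ≤ K * u n) (hu : limsup u atTop = 0) : limsup v atTop = 0 := by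
  rcases eq_or_ne K 0 with rfl | hK0
  · have hv : v = fun _ => 0 := funext fun n => le_antisymm (by simpa using h n) zero_le
    rw [hv]
    exact limsup_const 0
  · rw [← le_zero_iff]
    apply ENNReal.le_of_forall_pos_le_add
    intro ε hε _
    rw [zero_add]
    have hεK : (0 : ℝ≥0∞) < ↑ε / K := ENNReal.div_pos (ENNReal.coe_ne_zero.mpr hε.ne') hKt
    have hev : ∀ᶠ n in atTop, u n < ↑ε / K :=
      eventually_lt_of_limsup_lt (by rw [hu]; exact hεK)
    refine limsup_le_of_le (by isBoundedDefault) (hev.mono fun n hn => ?_)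
    calc v n ≤ K * u n := h n
      _ ≤ K * (↑ε / K) := mul_le_mul_right hn.le K
      _ ≤ ↑ε := ENNReal.mul_div_le

lemma liminf_zero_of_le_mul {u v : ℕ → ℝ≥0∞} {K : ℝ≥0∞} (hKt : K ≠ ∞)
    (h : ∀ n, v n ≤ K * u n) (hu : liminf u atTop = 0) : liminf v atTop = 0 := by
  rcases eq_or_ne K 0 with rfl | hK0
  · have hv : v = fun _ => 0 := funext fun n => le_antisymm (by simpa using h n) zero_le
    rw [hv]
    exact liminf_const 0
  · rw [← le_zero_iff]
    apply ENNReal.le_of_forall_pos_le_add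
    intro ε hε _
    rw [zero_add]
    have hεK : (0 : ℝ≥0∞) < ↑ε / K := ENNReal.div_pos (ENNReal.coe_ne_zero.mpr hε.ne') hKt
    have hfr : ∃ᶠ n in atTop, u n < ↑ε / K :=
      frequently_lt_of_liminf_lt (by isBoundedDefault) (by rw [hu]; exact hεK)
    refine liminf_le_of_frequently_le (hfr.mono fun n hn => ?_) (by isBoundedDefault)
    calc v n ≤ K * u n := h n
      _ ≤ K * (↑ε / K) := mul_le_mul_right hn.le K
      _ ≤ ↑ε := ENNReal.mul_div_le

lemma pressure_sInf_facts (L : (ℕ → ℝ≥0∞) → ℝ≥0∞)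
    (hL1 : ∀ u v : ℕ → ℝ≥0∞, (∀ n, u n ≤ v n) → L u ≤ L v)
    (hL2 : L (fun _ => 1) = 1)
    (hL3 : ∀ (u v : ℕ → ℝ≥0∞) (K : ℝ≥0∞), K ≠ ∞ → (∀ n, v n ≤ K * u n) → L u = 0 → L v = 0)
    (hδ : 0 < δ) (hZ : Z.Nonempty) (hM : ∀ x, |ψ x| ≤ M)
    (hθ : 0 < θ) (hθφ : θ < φ') (hφ1 : φ' ≤ 1) {γ : ℝ} (hγ0 : 0 ≤ γ)
    (hγ : ∀ a b : X, dist a b ≤ δ → ψ a - ψ b ≤ γ) :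
    -M ≤ sInf {α : ℝ | L (fun N => MBall f Z α ψ δ N θ) = 0} ∧
    -M ≤ sInf {α : ℝ | L (fun N => MBall f Z α ψ δ N φ') = 0} ∧
    sInf {α : ℝ | L (fun N => MBall f Z α ψ δ N θ) = 0} ≤
      sInf {α : ℝ | L (fun N => MBall f Z α ψ δ N φ') = 0} ∧
    sInf {α : ℝ | L (fun N => MBall f Z α ψ δ N φ') = 0} ≤
      (φ' / θ) * (sInf {α : ℝ | L (fun N => MBall f Z α ψ δ N θ) = 0} + M) - M + γ := by
  obtain ⟨z0, hz0⟩ := hZ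
  have hM0 : 0 ≤ M := le_trans (abs_nonneg _) (hM z0)
  have hφ0 : 0 < φ' := hθ.trans hθφ
  have hc1 : (1 : ℝ) ≤ φ' / θ := (one_le_div hθ).mpr hθφ.le
  set A := {α : ℝ | L (fun N => MBall f Z α ψ δ N θ) = 0} with hA
  set B := {α : ℝ | L (fun N => MBall f Z α ψ δ N φ') = 0} with hB
  have hBA : B ⊆ A := by
    intro α hα
    have h1 := hL1 _ _ (fun N => MBall_mono_theta (f := f) (Z := Z) (α := α) (ψ := ψ)
      (δ := δ) hθ hθφ.le N)
    rw [hα] at h1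
    exact le_zero_iff.mp h1
  have hAbd : ∀ α ∈ A, -M ≤ α := by
    intro α hα
    by_contra hlt
    push_neg at hlt
    have h2 := hL1 _ _ (fun N => one_le_MBall (f := f) hδ ⟨z0, hz0⟩ hM hlt N θ)
    rw [hL2, hα] at h2
    simp at h2
  have hBbd : ∀ α ∈ B, -M ≤ α := by
    intro α hα
    by_contra hlt
    push_neg at hlt
    have h2 := hL1 _ _ (fun N => one_le_MBall (f := f) hδ ⟨z0, hz0⟩ hM hlt N φ')
    rw [hL2, hα] at h2
    simp at h2
  have hmap : ∀ α ∈ A, ((φ' / θ) * (α + M) - M + γ) ∈ B := by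
    intro α hα
    exact hL3 _ _ (ENNReal.ofReal (Real.exp (α + M))) ENNReal.ofReal_ne_top
      (fun N' => MBall_truncation hδ hθ hθφ hφ1 hM (hAbd α hα) hγ0 hγ N') hα
  rcases A.eq_empty_or_nonempty with hAe | hAne
  · have hBe : B = ∅ := Set.eq_empty_of_subset_empty (hAe ▸ hBA)
    rw [hAe, hBe, Real.sInf_empty]
    refine ⟨by linarith, by linarith, le_refl _, ?_⟩
    nlinarith
  · obtain ⟨α₀, hα₀⟩ := hAne
    have hBne : B.Nonempty := ⟨_, hmap α₀ hα₀⟩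
    have hbddA : BddBelow A := ⟨-M, hAbd⟩
    have hbddB : BddBelow B := ⟨-M, hBbd⟩
    have h1 : -M ≤ sInf A := le_csInf ⟨α₀, hα₀⟩ hAbd
    have h2 : -M ≤ sInf B := le_csInf hBne hBbd
    have h3 : sInf A ≤ sInf B := csInf_le_csInf hbddA hBne hBA
    refine ⟨h1, h2, h3, ?_⟩
    have step : ∀ α ∈ A, sInf B ≤ (φ' / θ) * (α + M) - M + γ :=
      fun α hα => csInf_le hbddB (hmap α hα)
    have hlow : (sInf B + M - γ) / (φ' / θ) - M ≤ sInf A := by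
      refine le_csInf ⟨α₀, hα₀⟩ fun α hα => ?_
      have h4 := step α hα
      have h5 : sInf B + M - γ ≤ (α + M) * (φ' / θ) := by nlinarith
      have h6 : (sInf B + M - γ) / (φ' / θ) ≤ α + M := (div_le_iff₀ (by positivity)).mpr h5
      linarith
    have h7 : (sInf B + M - γ) / (φ' / θ) ≤ sInf A + M := by linarith
    have h8 : sInf B + M - γ ≤ (sInf A + M) * (φ' / θ) := (div_le_iff₀ (by positivity)).mp h7
    nlinarith

lemma limsup_chain_real {h g γ : ℝ → ℝ} {M c : ℝ} (hM0 : 0 ≤ M) (hc : 1 ≤ c)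
    (hfacts : ∀ᶠ δ in 𝓝[>] (0 : ℝ),
      -M ≤ h δ ∧ -M ≤ g δ ∧ h δ ≤ g δ ∧ g δ ≤ c * (h δ + M) - M + γ δ ∧ 0 ≤ γ δ)
    (hγ : ∀ ε : ℝ, 0 < ε → ∀ᶠ δ in 𝓝[>] (0 : ℝ), γ δ ≤ ε) :
    limsup h (𝓝[>] (0 : ℝ)) ≤ limsup g (𝓝[>] (0 : ℝ)) ∧
      limsup g (𝓝[>] (0 : ℝ)) ≤ c * limsup h (𝓝[>] (0 : ℝ)) + (c - 1) * M := by
  set l := 𝓝[>] (0 : ℝ) with hl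
  have hc0 : (0 : ℝ) < c := lt_of_lt_of_le one_pos hc
  by_cases hbdd : ∃ a, ∀ᶠ δ in l, g δ ≤ a
  · obtain ⟨a, ha⟩ := hbdd
    have hbg : IsBoundedUnder (· ≤ ·) l g := ⟨a, eventually_map.mpr ha⟩
    have hbh : IsBoundedUnder (· ≤ ·) l h :=
      ⟨a, eventually_map.mpr ((hfacts.and ha).mono fun δ hδ => hδ.1.2.2.1.trans hδ.2)⟩
    have hlbh : IsBoundedUnder (· ≥ ·) l h :=
      ⟨-M, eventually_map.mpr (hfacts.mono fun δ hδ => hδ.1)⟩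
    have hlbg : IsBoundedUnder (· ≥ ·) l g :=
      ⟨-M, eventually_map.mpr (hfacts.mono fun δ hδ => hδ.2.1)⟩
    have hcobh : IsCoboundedUnder (· ≤ ·) l h := hlbh.isCoboundedUnder_le
    have hcobg : IsCoboundedUnder (· ≤ ·) l g := hlbg.isCoboundedUnder_le
    constructor
    · exact limsup_le_limsup (hfacts.mono fun δ hδ => hδ.2.2.1) hcobh hbg
    · have key : ∀ ε : ℝ, 0 < ε → limsup g l ≤ c * limsup h l + (c - 1) * M + (c + 1) * ε := by
        intro ε hε
        have h1 : ∀ᶠ δ in l, h δ < limsup h l + ε :=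
          eventually_lt_of_limsup_lt (by linarith) hbh
        have h3 : ∀ᶠ δ in l, g δ ≤ c * limsup h l + (c - 1) * M + (c + 1) * ε := by
          filter_upwards [hfacts, h1, hγ ε hε] with δ hf hh hg2
          have h5 : c * (h δ + M) ≤ c * (limsup h l + ε + M) :=
            mul_le_mul_of_nonneg_left (by linarith) (by linarith)
          have h6 := hf.2.2.2.1
          linarith
        exact limsup_le_of_le hcobg h3
      by_contra hcon
      push_neg at hcon
      set T := c * limsup h l + (c - 1) * M with hT
      have hTg : 0 < limsup g l - T := by linarith
      have hkey := key ((limsup g l - T) / (2 * (c + 1))) (by positivity)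
      have hcc : (c + 1) * ((limsup g l - T) / (2 * (c + 1))) = (limsup g l - T) / 2 := by
        field_simp
      linarith
  · push_neg at hbdd
    have hsg : {a : ℝ | ∀ᶠ δ in l, g δ ≤ a} = ∅ :=
      Set.eq_empty_iff_forall_notMem.mpr fun a ha => (hbdd a) (Filter.Eventually.mono (show ∀ᶠ δ in l, g δ ≤ a from ha) fun x hx => not_lt.mpr hx)
    have hsh : {a : ℝ | ∀ᶠ δ in l, h δ ≤ a} = ∅ := by
      refine Set.eq_empty_iff_forall_notMem.mpr fun a ha => hbdd (c * (a + M) - M + 1)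
        ((?_ : ∀ᶠ δ in l, g δ ≤ c * (a + M) - M + 1).mono fun x hx => not_lt.mpr hx)
      filter_upwards [hfacts, ha, hγ 1 one_pos] with δ hf hh hg2
      have h5 : c * (h δ + M) ≤ c * (a + M) :=
        mul_le_mul_of_nonneg_left (by linarith) (by linarith)
      have h6 := hf.2.2.2.1
      linarith
    rw [limsup_eq, limsup_eq, hsg, hsh, Real.sInf_empty]
    constructor
    · exact le_refl _
    · nlinarith

/-- Maximal oscillation `sup {ψ a - ψ b : dist a b ≤ δ}` of `ψ` at scale `δ`. -/
noncomputable def oscBound (ψ : X → ℝ) (δ : ℝ) : ℝ :=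
  sSup ((fun q : X × X => ψ q.1 - ψ q.2) '' {q : X × X | dist q.1 q.2 ≤ δ})

lemma osc_bddAbove (hM : ∀ x, |ψ x| ≤ M) (δ : ℝ) :
    BddAbove ((fun q : X × X => ψ q.1 - ψ q.2) '' {q : X × X | dist q.1 q.2 ≤ δ}) := by
  refine ⟨2 * M, ?_⟩
  rintro y ⟨⟨a, b⟩, -, rfl⟩
  have h1 := abs_le.mp (hM a)
  have h2 := abs_le.mp (hM b)
  show ψ a - ψ b ≤ 2 * M
  linarith [h1.1, h1.2, h2.1, h2.2]

lemma osc_le (hM : ∀ x, |ψ x| ≤ M) {a b : X} (hab : dist a b ≤ δ) :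
    ψ a - ψ b ≤ oscBound ψ δ :=
  le_csSup (osc_bddAbove hM δ) ⟨(a, b), hab, rfl⟩

lemma osc_nonneg (x0 : X) (hδ : 0 ≤ δ) (hM : ∀ x, |ψ x| ≤ M) : 0 ≤ oscBound ψ δ := by
  have h := osc_le (δ := δ) hM (a := x0) (b := x0) (by simpa using hδ)
  simpa using h

lemma osc_small [CompactSpace X] (hψ : Continuous ψ) (x0 : X)
    {ε : ℝ} (hε : 0 < ε) : ∀ᶠ δ in 𝓝[>] (0 : ℝ), oscBound ψ δ ≤ ε := by
  obtain ⟨δ₀, hδ₀, H⟩ := Metric.uniformContinuous_iff.mp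
    (CompactSpace.uniformContinuous_of_continuous hψ) ε hε
  filter_upwards [Ioo_mem_nhdsGT_of_mem (Set.mem_Ico.mpr ⟨le_refl (0 : ℝ), hδ₀⟩)] with δ hδ
  refine csSup_le ⟨_, ⟨(x0, x0), by simpa using hδ.1.le, rfl⟩⟩ ?_
  rintro y ⟨⟨a, b⟩, hab, rfl⟩
  have hd : dist a b < δ₀ := lt_of_le_of_lt hab hδ.2
  have h1 := H hd
  rw [Real.dist_eq] at h1
  have h2 : ψ a - ψ b ≤ |ψ a - ψ b| := le_abs_self _
  show ψ a - ψ b ≤ ε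
  linarith

end AuxProofs

/-- for `0 < θ < φ' ≤ 1`,
`P(f,Z,φ,θ) ≤ P(f,Z,φ,φ') ≤ (φ'/θ)P(f,Z,φ,θ) + (φ'/θ − 1)‖φ‖`, for both pressures;
in particular the corresponding chain for the intermediate entropies (φ = 0). -/
theorem pressure_theta_comparison {X : Type*} [MetricSpace X] [CompactSpace X]
    (f : ℕ → X → X) (hf : ∀ i, Continuous (f i))
    (Z : Set X) (hZ : Z.Nonempty) (φ : C(X, ℝ)) (θ φ' : ℝ)
    (hθ0 : 0 < θ) (hθφ : θ < φ') (hφ'1 : φ' ≤ 1) :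
    (upperP f Z (⇑φ) θ ≤ upperP f Z (⇑φ) φ' ∧
      upperP f Z (⇑φ) φ' ≤ (φ' / θ) * upperP f Z (⇑φ) θ + (φ' / θ - 1) * ‖φ‖) ∧
    (lowerP f Z (⇑φ) θ ≤ lowerP f Z (⇑φ) φ' ∧
      lowerP f Z (⇑φ) φ' ≤ (φ' / θ) * lowerP f Z (⇑φ) θ + (φ' / θ - 1) * ‖φ‖) ∧
    (upperP f Z (fun _ => 0) θ ≤ upperP f Z (fun _ => 0) φ' ∧
      upperP f Z (fun _ => 0) φ' ≤ (φ' / θ) * upperP f Z (fun _ => 0) θ) := by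
  have hφ0 : 0 < φ' := hθ0.trans hθφ
  have hc1 : (1 : ℝ) ≤ φ' / θ := (one_le_div hθ0).mpr hθφ.le
  have core : ∀ (ψ : X → ℝ) (M : ℝ), Continuous ψ → (∀ x, |ψ x| ≤ M) →
      (upperP f Z ψ θ ≤ upperP f Z ψ φ' ∧
        upperP f Z ψ φ' ≤ (φ' / θ) * upperP f Z ψ θ + (φ' / θ - 1) * M) ∧
      (lowerP f Z ψ θ ≤ lowerP f Z ψ φ' ∧
        lowerP f Z ψ φ' ≤ (φ' / θ) * lowerP f Z ψ θ + (φ' / θ - 1) * M) := by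
    intro ψ M hψc hψM
    obtain ⟨z0, hz0⟩ := hZ
    have hM0 : 0 ≤ M := le_trans (abs_nonneg _) (hψM z0)
    have hγsmall : ∀ ε : ℝ, 0 < ε → ∀ᶠ δ in 𝓝[>] (0 : ℝ), oscBound ψ δ ≤ ε :=
      fun ε hε => osc_small hψc z0 hε
    have hfactsU : ∀ᶠ δ in 𝓝[>] (0 : ℝ),
        -M ≤ upperPBall f Z ψ δ θ ∧ -M ≤ upperPBall f Z ψ δ φ' ∧
        upperPBall f Z ψ δ θ ≤ upperPBall f Z ψ δ φ' ∧
        upperPBall f Z ψ δ φ' ≤ (φ' / θ) * (upperPBall f Z ψ δ θ + M) - M + oscBound ψ δ ∧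
        0 ≤ oscBound ψ δ := by
      filter_upwards [self_mem_nhdsWithin] with δ hδ
      have hδ0 : (0 : ℝ) < δ := hδ
      have hosc0 : 0 ≤ oscBound ψ δ := osc_nonneg z0 hδ0.le hψM
      have hfact := pressure_sInf_facts (f := f) (Z := Z) (fun u => limsup u atTop)
        (fun u v huv => limsup_le_limsup (Eventually.of_forall huv)) (limsup_const 1)
        (fun u v K hK hle h0 => limsup_zero_of_le_mul hK hle h0)
        hδ0 ⟨z0, hz0⟩ hψM hθ0 hθφ hφ'1 hosc0 (fun a b hab => osc_le hψM hab)
      exact ⟨hfact.1, hfact.2.1, hfact.2.2.1, hfact.2.2.2, hosc0⟩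
    have hfactsL : ∀ᶠ δ in 𝓝[>] (0 : ℝ),
        -M ≤ lowerPBall f Z ψ δ θ ∧ -M ≤ lowerPBall f Z ψ δ φ' ∧
        lowerPBall f Z ψ δ θ ≤ lowerPBall f Z ψ δ φ' ∧
        lowerPBall f Z ψ δ φ' ≤ (φ' / θ) * (lowerPBall f Z ψ δ θ + M) - M + oscBound ψ δ ∧
        0 ≤ oscBound ψ δ := by
      filter_upwards [self_mem_nhdsWithin] with δ hδ
      have hδ0 : (0 : ℝ) < δ := hδ
      have hosc0 : 0 ≤ oscBound ψ δ := osc_nonneg z0 hδ0.le hψM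
      have hfact := pressure_sInf_facts (f := f) (Z := Z) (fun u => liminf u atTop)
        (fun u v huv => liminf_le_liminf (Eventually.of_forall huv)) (liminf_const 1)
        (fun u v K hK hle h0 => liminf_zero_of_le_mul hK hle h0)
        hδ0 ⟨z0, hz0⟩ hψM hθ0 hθφ hφ'1 hosc0 (fun a b hab => osc_le hψM hab)
      exact ⟨hfact.1, hfact.2.1, hfact.2.2.1, hfact.2.2.2, hosc0⟩
    have hU := limsup_chain_real hM0 hc1 hfactsU hγsmall
    have hLo := limsup_chain_real hM0 hc1 hfactsL hγsmall
    exact ⟨hU, hLo⟩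
  obtain ⟨hUφ, hLφ⟩ := core (⇑φ) ‖φ‖ φ.continuous
    (fun x => by simpa [Real.norm_eq_abs] using φ.norm_coe_le_norm x)
  obtain ⟨hU0, -⟩ := core (fun _ => 0) 0 continuous_const (fun x => by simp)
  refine ⟨hUφ, hLφ, hU0.1, ?_⟩
  have h := hU0.2
  rw [mul_zero, add_zero] at h
  exact h

end NDSPressure
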